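/- L1 concentration of the empirical transition kernel: fix a state-action pair (s,a) and time h with transition distribution p_h(·|s,a) over S states. If p̄_h^k(·|s,a) is the empirical distribution formed from n ≥ 1 i.i.d. samples, then with probability at least 1 − δ, ‖p_h(·|s,a) − p̄_h(·|s,a)‖_1 ≤ √(4S·ln(3/δ)/n). -/

import Mathlib

open MeasureTheory Finset

open Real

lemma weissman_D_pos {q : ℝ} (hq0 : 0 ≤ q) (hq1 : q ≤ 1) (x : ℝ) :
    0 < 1 - q + q * Real.exp (-x) := by
  rcases eq_or_lt_of_le hq1 with h | h
  · rw [h]; simpa using Real.exp_pos (-x)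
  · have : 0 ≤ q * Real.exp (-x) := mul_nonneg hq0 (Real.exp_pos _).le
    linarith

lemma weissman_phi_deriv {q : ℝ} (hq0 : 0 ≤ q) (hq1 : q ≤ 1) (x : ℝ) :
    HasDerivAt (fun y => q * Real.exp (-y) / (1 - q + q * Real.exp (-y)))
      (-(q * Real.exp (-x) / (1 - q + q * Real.exp (-x)) *
        (1 - q * Real.exp (-x) / (1 - q + q * Real.exp (-x))))) x := by
  have hD := weissman_D_pos hq0 hq1 x
  have hexp : HasDerivAt (fun y : ℝ => Real.exp (-y)) (-Real.exp (-x)) x := by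
    simpa [Function.comp_def] using (Real.hasDerivAt_exp (-x)).comp x (hasDerivAt_neg x)
  have hN : HasDerivAt (fun y : ℝ => q * Real.exp (-y)) (-(q * Real.exp (-x))) x := by
    simpa [mul_neg] using hexp.const_mul q
  have hDen : HasDerivAt (fun y : ℝ => 1 - q + q * Real.exp (-y)) (-(q * Real.exp (-x))) x := by
    simpa using hN.const_add (1 - q)
  have := hN.div hDen hD.ne'
  refine this.congr_deriv ?_
  field_simp
  ring

lemma weissman_hoeffding {q t : ℝ} (hq0 : 0 ≤ q) (hq1 : q ≤ 1) (ht : 0 ≤ t) :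
    (1 - q) * Real.exp (t * q) + q * Real.exp (t * (q - 1)) ≤ Real.exp (t ^ 2 / 8) := by
  set φ : ℝ → ℝ := fun y => q * Real.exp (-y) / (1 - q + q * Real.exp (-y)) with hφ
  have hD : ∀ x : ℝ, 0 < 1 - q + q * Real.exp (-x) := weissman_D_pos hq0 hq1
  have hφdiff : Differentiable ℝ φ := fun x => (weissman_phi_deriv hq0 hq1 x).differentiableAt
  -- Step 1 : φ x ≥ q - x/4 on [0, ∞)
  have hG : MonotoneOn (fun x => φ x - q + x / 4) (Set.Ici 0) := by
    apply monotoneOn_of_deriv_nonneg (convex_Ici 0)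
    · exact ((hφdiff.continuous.sub continuous_const).add
        (continuous_id.div_const 4)).continuousOn
    · intro x _
      exact ((hφdiff x).sub_const q).add ((differentiable_id.div_const 4) x)
        |>.differentiableWithinAt
    · intro x _
      have h1 : HasDerivAt (fun x => φ x - q + x / 4) (-(φ x * (1 - φ x)) + 1 / 4) x := by
        simpa [Pi.add_def] using ((weissman_phi_deriv hq0 hq1 x).sub_const q).add
          ((hasDerivAt_id x).div_const 4)
      rw [h1.deriv]
      nlinarith [sq_nonneg (φ x - 1 / 2)]
  have hφ0 : φ 0 = q := by
    simp [hφ]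
  have hφ_ge : ∀ x : ℝ, 0 ≤ x → q - x / 4 ≤ φ x := by
    intro x hx
    have := hG (Set.self_mem_Ici) hx hx
    simp only [hφ0] at this
    linarith
  -- Step 2 : t*q + log (D t) ≤ t^2/8 on [0,∞)
  have hHder : ∀ x : ℝ,
      HasDerivAt (fun x => x ^ 2 / 8 - (x * q + Real.log (1 - q + q * Real.exp (-x))))
        (2 * x / 8 - (q + -(q * Real.exp (-x)) / (1 - q + q * Real.exp (-x)))) x := by
    intro x
    have hexp : HasDerivAt (fun y : ℝ => Real.exp (-y)) (-Real.exp (-x)) x := by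
      simpa [Function.comp_def] using (Real.hasDerivAt_exp (-x)).comp x (hasDerivAt_neg x)
    have hDen : HasDerivAt (fun y : ℝ => 1 - q + q * Real.exp (-y))
        (-(q * Real.exp (-x))) x := by
      simpa [mul_neg] using (hexp.const_mul q).const_add (1 - q)
    have hlog := hDen.log (hD x).ne'
    have hsq : HasDerivAt (fun x : ℝ => x ^ 2 / 8) (2 * x / 8) x := by
      simpa using ((hasDerivAt_pow 2 x).div_const 8)
    have := hsq.sub (((hasDerivAt_id x).mul_const q).add hlog)
    simpa [Pi.add_def, Pi.sub_def] using this
  have hH : MonotoneOn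
      (fun x => x ^ 2 / 8 - (x * q + Real.log (1 - q + q * Real.exp (-x)))) (Set.Ici 0) := by
    apply monotoneOn_of_deriv_nonneg (convex_Ici 0)
    · exact Continuous.continuousOn (by
        exact continuous_iff_continuousAt.2 fun x => (hHder x).differentiableAt.continuousAt)
    · exact fun x _ => (hHder x).differentiableAt.differentiableWithinAt
    · intro x hx
      rw [interior_Ici, Set.mem_Ioi] at hx
      rw [(hHder x).deriv]
      have hphix := hφ_ge x hx.le
      have hD' := hD x
      have : -(q * Real.exp (-x)) / (1 - q + q * Real.exp (-x)) = -φ x := by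
        simp [hφ, neg_div]
      rw [this]
      linarith
  -- conclude
  have hH0 : (fun x => x ^ 2 / 8 - (x * q + Real.log (1 - q + q * Real.exp (-x)))) 0 = 0 := by
    simp
  have hHt := hH (Set.self_mem_Ici) (Set.mem_Ici.2 ht) ht
  rw [hH0] at hHt
  have hlog_le : t * q + Real.log (1 - q + q * Real.exp (-t)) ≤ t ^ 2 / 8 := by linarith
  have hexp_le := Real.exp_le_exp.2 hlog_le
  rw [Real.exp_add, Real.exp_log (hD t)] at hexp_le
  calc (1 - q) * Real.exp (t * q) + q * Real.exp (t * (q - 1))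
      = Real.exp (t * q) * (1 - q + q * Real.exp (-t)) := by
        rw [show t * (q - 1) = t * q + -t by ring, Real.exp_add]; ring
    _ ≤ Real.exp (t ^ 2 / 8) := hexp_le

open MeasureTheory Finset

lemma weissman_measurable_discrete {σ : Type*} [Fintype σ] [MeasurableSpace σ]
    [MeasurableSingletonClass σ]
    {β : Type*} [MeasurableSpace β] (g : σ → β) : Measurable g := by
  intro B _
  exact (Set.toFinite _).measurableSet

lemma weissman_chernoff
    {Ω : Type*} [MeasureSpace Ω] [IsProbabilityMeasure (volume : Measure Ω)]
    {σ : Type*} [Fintype σ] [DecidableEq σ] [MeasurableSpace σ]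
    [MeasurableSingletonClass σ]
    (n : ℕ) (p : σ → ℝ) (hp0 : ∀ s, 0 ≤ p s) (hp1 : ∑ s, p s = 1)
    (Y : Fin n → Ω → σ) (hmeas : ∀ j, Measurable (Y j))
    (hindep : ProbabilityTheory.iIndepFun Y volume)
    (hlaw : ∀ j s, (volume {ω | Y j ω = s}).toReal = p s)
    (A : Finset σ) (t : ℝ) (ht : 0 ≤ t) (a : ℝ) :
    (volume {ω | a ≤ ∑ j, ((∑ s ∈ A, p s) - if Y j ω ∈ A then (1:ℝ) else 0)}).toReal ≤
      Real.exp (-t * a + n * (t ^ 2 / 8)) := by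
  classical
  set q : ℝ := ∑ s ∈ A, p s with hq
  have hq0 : 0 ≤ q := Finset.sum_nonneg fun s _ => hp0 s
  have hq1 : q ≤ 1 := by
    rw [hq, ← hp1]
    exact Finset.sum_le_sum_of_subset_of_nonneg (Finset.subset_univ A) fun s _ _ => hp0 s
  set g : σ → ℝ := fun s => q - if s ∈ A then (1:ℝ) else 0 with hg
  set Z : Fin n → Ω → ℝ := fun j ω => q - if Y j ω ∈ A then (1:ℝ) else 0 with hZ
  have hZg : Z = fun j => g ∘ Y j := rfl
  have hmeasZ : ∀ j, Measurable (Z j) := fun j =>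
    (weissman_measurable_discrete g).comp (hmeas j)
  have hindepZ : ProbabilityTheory.iIndepFun Z volume := by
    rw [hZg]
    exact hindep.comp (fun _ => g) (fun _ => weissman_measurable_discrete g)
  -- the event set for each j
  have hEmeas : ∀ j : Fin n, MeasurableSet {ω | Y j ω ∈ A} := fun j =>
    hmeas j ((Set.toFinite _).measurableSet)
  have hμE : ∀ j : Fin n, (volume {ω | Y j ω ∈ A}).toReal = q := by
    intro j
    have hset : {ω | Y j ω ∈ A} = ⋃ s ∈ A, {ω | Y j ω = s} := by
      ext ω; simp
    have hdisj : Set.PairwiseDisjoint (↑A : Set σ) (fun s => {ω | Y j ω = s}) := by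
      intro s _ s' _ hss'
      refine Set.disjoint_left.2 fun ω h1 h2 => hss' ?_
      rw [← h1, ← h2]
    rw [hset, measure_biUnion_finset hdisj
      (fun s _ => hmeas j (measurableSet_singleton s)),
      ENNReal.toReal_sum (fun s _ => measure_ne_top _ _)]
    exact Finset.sum_congr rfl fun s _ => hlaw j s
  -- rewrite exp(t * Z j) as indicator + const
  have hrw : ∀ j : Fin n, (fun ω => Real.exp (t * Z j ω)) =
      fun ω => Set.indicator {ω | Y j ω ∈ A}
        (fun _ => Real.exp (t * (q - 1)) - Real.exp (t * q)) ω + Real.exp (t * q) := by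
    intro j
    funext ω
    by_cases h : Y j ω ∈ A <;> simp [hZ, h, Set.indicator_of_mem, Set.indicator_of_notMem]
  have hint : ∀ j : Fin n, Integrable (fun ω => Real.exp (t * Z j ω)) volume := by
    intro j
    rw [hrw j]
    exact ((integrable_const _).indicator (hEmeas j)).add (integrable_const _)
  have hmgf : ∀ j : Fin n, ProbabilityTheory.mgf (Z j) volume t =
      (1 - q) * Real.exp (t * q) + q * Real.exp (t * (q - 1)) := by
    intro j
    rw [ProbabilityTheory.mgf, hrw j]
    rw [integral_add ((integrable_const _).indicator (hEmeas j)) (integrable_const _),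
      integral_indicator_const _ (hEmeas j), integral_const]
    simp [hμE j]
    simp only [Measure.real, hμE j]
    ring
  have hmgf_le : ∀ j : Fin n, ProbabilityTheory.mgf (Z j) volume t ≤ Real.exp (t ^ 2 / 8) := by
    intro j
    rw [hmgf j]
    exact weissman_hoeffding hq0 hq1 ht
  have hint_sum : Integrable (fun ω => Real.exp (t * (∑ j, Z j) ω)) volume :=
    hindepZ.integrable_exp_mul_sum hmeasZ (fun j _ => hint j)
  have hchern := ProbabilityTheory.measure_ge_le_exp_mul_mgf
    (X := ∑ j, Z j) (μ := volume) a ht hint_sum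
  have hmgfsum : ProbabilityTheory.mgf (∑ j, Z j) volume t ≤ Real.exp (n * (t ^ 2 / 8)) := by
    rw [hindepZ.mgf_sum hmeasZ univ]
    calc ∏ j : Fin n, ProbabilityTheory.mgf (Z j) volume t
        ≤ ∏ _j : Fin n, Real.exp (t ^ 2 / 8) :=
          Finset.prod_le_prod (fun j _ => ProbabilityTheory.mgf_nonneg) (fun j _ => hmgf_le j)
      _ = Real.exp (n * (t ^ 2 / 8)) := by
          rw [Finset.prod_const, card_univ, Fintype.card_fin, ← Real.exp_nat_mul]
  have hsetrw : {ω | a ≤ (∑ j, Z j) ω} =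
      {ω | a ≤ ∑ j, ((∑ s ∈ A, p s) - if Y j ω ∈ A then (1:ℝ) else 0)} := by
    ext ω
    simp [Finset.sum_apply, hZ, hq]
  calc (volume {ω | a ≤ ∑ j, ((∑ s ∈ A, p s) - if Y j ω ∈ A then (1:ℝ) else 0)}).toReal
      = (volume {ω | a ≤ (∑ j, Z j) ω}).toReal := by rw [hsetrw]
    _ ≤ Real.exp (-t * a) * ProbabilityTheory.mgf (∑ j, Z j) volume t := hchern
    _ ≤ Real.exp (-t * a) * Real.exp (n * (t ^ 2 / 8)) := by
        exact mul_le_mul_of_nonneg_left hmgfsum (Real.exp_pos _).le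
    _ = Real.exp (-t * a + n * (t ^ 2 / 8)) := (Real.exp_add _ _).symm


/-- L1 concentration of the empirical distribution (Weissman et al.): if `p̄` is the
empirical distribution formed from `n ≥ 1` i.i.d. samples `Y_1,…,Y_n` from a
distribution `p` over a finite set of size `S`, then with probability at least `1 − δ`,
`‖p − p̄‖₁ ≤ √(4S·ln(3/δ)/n)`. -/
theorem empirical_distribution_l1_concentration
    {Ω : Type*} [MeasureSpace Ω] [IsProbabilityMeasure (volume : Measure Ω)]
    {σ : Type*} [Fintype σ] [DecidableEq σ] [MeasurableSpace σ]
    [MeasurableSingletonClass σ]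
    (n : ℕ) (hn : 1 ≤ n) (δ : ℝ) (hδ0 : 0 < δ) (hδ1 : δ < 1)
    (p : σ → ℝ) (hp0 : ∀ s, 0 ≤ p s) (hp1 : ∑ s, p s = 1)
    (Y : Fin n → Ω → σ) (hmeas : ∀ j, Measurable (Y j))
    (hindep : ProbabilityTheory.iIndepFun Y volume)
    (hlaw : ∀ j s, (volume {ω | Y j ω = s}).toReal = p s)
    (pbar : Ω → σ → ℝ)
    (hpbar : ∀ ω s, pbar ω s =
      ((Finset.univ.filter fun j => Y j ω = s).card : ℝ) / n) :
    ENNReal.ofReal (1 - δ) ≤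
      volume {ω | ∑ s, |p s - pbar ω s| ≤
        Real.sqrt (4 * (Fintype.card σ) * Real.log (3 / δ) / n)} := by
  classical
  have hofδ : ENNReal.ofReal (1 - δ) ≤ 1 := by
    rw [← ENNReal.ofReal_one]
    exact ENNReal.ofReal_le_ofReal (by linarith)
  rcases isEmpty_or_nonempty σ with hσ | hσ
  · have : {ω : Ω | ∑ s, |p s - pbar ω s| ≤
        Real.sqrt (4 * (Fintype.card σ) * Real.log (3 / δ) / n)} = Set.univ := by
      ext ω
      simp only [Set.mem_setOf_eq, Set.mem_univ, iff_true]
      rw [Finset.univ_eq_empty, Finset.sum_empty]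
      exact Real.sqrt_nonneg _
    rw [this, measure_univ]
    exact hofδ
  -- main case
  have hnR : (0:ℝ) < n := by exact_mod_cast hn
  set S : ℕ := Fintype.card σ with hS
  have hS1 : 1 ≤ S := Fintype.card_pos
  set L : ℝ := Real.log (3 / δ) with hLdef
  have hL : 0 < L := Real.log_pos (by rw [lt_div_iff₀ hδ0]; linarith)
  set ε : ℝ := Real.sqrt (4 * S * L / n) with hεdef
  have hε0 : 0 ≤ ε := Real.sqrt_nonneg _
  have hε2 : ε ^ 2 = 4 * S * L / n := by
    rw [hεdef, Real.sq_sqrt]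
    positivity
  -- counting function is measurable
  have hcount : ∀ s : σ, Measurable (fun ω => ((univ.filter fun j => Y j ω = s).card : ℝ)) := by
    intro s
    have heq : (fun ω => ((univ.filter fun j => Y j ω = s).card : ℝ)) =
        fun ω => ∑ j, if Y j ω = s then (1:ℝ) else 0 := by
      funext ω
      rw [Finset.card_filter]
      push_cast
      rfl
    rw [heq]
    exact Finset.measurable_sum _ fun j _ =>
      Measurable.ite (hmeas j (measurableSet_singleton s)) measurable_const measurable_const
  set f : Ω → ℝ := fun ω => ∑ s, |p s - pbar ω s| with hfdef
  have hf : Measurable f := by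
    have heq : f = fun ω => ∑ s, |p s - ((univ.filter fun j => Y j ω = s).card : ℝ) / n| := by
      funext ω
      exact Finset.sum_congr rfl fun s _ => by rw [hpbar]
    rw [heq]
    exact Finset.measurable_sum _ fun s _ =>
      (measurable_const.sub ((hcount s).div_const n)).abs
  -- empirical distribution sums to one
  have hsum_count : ∀ ω, ∑ s, ((univ.filter fun j => Y j ω = s).card : ℝ) = n := by
    intro ω
    have h := Finset.card_eq_sum_card_fiberwise
      (f := fun j : Fin n => Y j ω) (s := univ) (t := univ) (fun j _ => Finset.mem_univ _)
    rw [card_univ, Fintype.card_fin] at h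
    exact_mod_cast h.symm
  have hsum_pbar : ∀ ω, ∑ s, pbar ω s = 1 := by
    intro ω
    have : ∑ s, pbar ω s = (∑ s, ((univ.filter fun j => Y j ω = s).card : ℝ)) / n := by
      rw [Finset.sum_div]
      exact Finset.sum_congr rfl fun s _ => by rw [hpbar]
    rw [this, hsum_count, div_self hnR.ne']
  -- the L1 identity
  have hL1 : ∀ ω, f ω = 2 * ∑ s ∈ univ.filter (fun s => pbar ω s < p s), (p s - pbar ω s) := by
    intro ω
    have h0 : ∑ s, (p s - pbar ω s) = 0 := by
      rw [Finset.sum_sub_distrib, hp1, hsum_pbar]; ring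
    have hsplit := Finset.sum_filter_add_sum_filter_not univ
      (fun s => pbar ω s < p s) (fun s => |p s - pbar ω s|)
    have hsplit0 := Finset.sum_filter_add_sum_filter_not univ
      (fun s => pbar ω s < p s) (fun s => (p s - pbar ω s))
    have h1 : ∑ s ∈ univ.filter (fun s => pbar ω s < p s), |p s - pbar ω s| =
        ∑ s ∈ univ.filter (fun s => pbar ω s < p s), (p s - pbar ω s) :=
      Finset.sum_congr rfl fun s hs => abs_of_pos (by
        have := (Finset.mem_filter.1 hs).2; linarith)
    have h2 : ∑ s ∈ univ.filter (fun s => ¬ pbar ω s < p s), |p s - pbar ω s| =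
        ∑ s ∈ univ.filter (fun s => ¬ pbar ω s < p s), -(p s - pbar ω s) :=
      Finset.sum_congr rfl fun s hs => abs_of_nonpos (by
        have := (Finset.mem_filter.1 hs).2; push_neg at this; linarith)
    have h3 : ∑ s ∈ univ.filter (fun s => ¬ pbar ω s < p s), -(p s - pbar ω s) =
        - ∑ s ∈ univ.filter (fun s => ¬ pbar ω s < p s), (p s - pbar ω s) :=
      by rw [Finset.sum_neg_distrib]
    rw [hfdef]
    simp only [← hsplit, h1, h2, h3]
    rw [h0] at hsplit0
    linarith
  -- relate the per-subset sums to the chernoff random variables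
  have hWrel : ∀ (ω : Ω) (A : Finset σ),
      ∑ j, ((∑ s ∈ A, p s) - if Y j ω ∈ A then (1:ℝ) else 0) =
        n * ∑ s ∈ A, (p s - pbar ω s) := by
    intro ω A
    have hfib := Finset.card_eq_sum_card_fiberwise
      (f := fun j : Fin n => Y j ω) (s := univ.filter fun j => Y j ω ∈ A) (t := A)
      (fun j hj => (Finset.mem_filter.1 hj).2)
    have hfib2 : ∀ s ∈ A, ((univ.filter fun j => Y j ω ∈ A).filter
        (fun j => Y j ω = s)) = univ.filter fun j => Y j ω = s := by
      intro s hs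
      rw [Finset.filter_filter]
      exact Finset.filter_congr fun j _ => by
        constructor
        · exact fun h => h.2
        · exact fun h => ⟨h ▸ hs, h⟩
    have hfib3 : ∑ b ∈ A, ((univ.filter fun j => Y j ω ∈ A).filter
        (fun j => Y j ω = b)).card = ∑ b ∈ A, (univ.filter fun j => Y j ω = b).card :=
      Finset.sum_congr rfl fun s hs => by rw [hfib2 s hs]
    rw [hfib3] at hfib
    have hcard : ∑ j, (if Y j ω ∈ A then (1:ℝ) else 0) =
        ((univ.filter fun j => Y j ω ∈ A).card : ℝ) := by
      rw [Finset.card_filter]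
      push_cast
      rfl
    rw [Finset.sum_sub_distrib, hcard, Finset.sum_const, card_univ, Fintype.card_fin,
      Finset.mul_sum]
    have hA : ∀ s ∈ A, (n:ℝ) * (p s - pbar ω s) =
        (n:ℝ) * p s - ((univ.filter fun j => Y j ω = s).card : ℝ) := by
      intro s _
      rw [hpbar]
      field_simp
    rw [Finset.sum_congr rfl hA, Finset.sum_sub_distrib, ← Finset.mul_sum]
    rw [hfib]
    push_cast
    ring
  -- union bound
  set bad : Finset σ → Set Ω := fun A => {ω | (n:ℝ) * ε / 2 ≤
      ∑ j, ((∑ s ∈ A, p s) - if Y j ω ∈ A then (1:ℝ) else 0)} with hbaddef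
  have hsubset : {ω | ε < f ω} ⊆ ⋃ A ∈ (univ : Finset (Finset σ)), bad A := by
    intro ω hω
    simp only [Set.mem_setOf_eq] at hω
    refine Set.mem_biUnion (Finset.mem_univ (univ.filter fun s => pbar ω s < p s)) ?_
    rw [hbaddef]
    simp only [Set.mem_setOf_eq]
    rw [hWrel ω]
    have := hL1 ω
    nlinarith [hnR]
  have hperA : ∀ A : Finset σ, volume (bad A) ≤ ENNReal.ofReal (Real.exp (-(2 * S * L))) := by
    intro A
    have hch := weissman_chernoff n p hp0 hp1 Y hmeas hindep hlaw A (2 * ε)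
      (by positivity) ((n:ℝ) * ε / 2)
    have hexp : -(2 * ε) * ((n:ℝ) * ε / 2) + (n:ℝ) * ((2 * ε) ^ 2 / 8) = -(2 * S * L) := by
      have hnε2 : (n:ℝ) * ε ^ 2 = 4 * S * L := by
        rw [hε2]; field_simp
      nlinarith [hnε2]
    rw [hexp] at hch
    rw [← ENNReal.ofReal_toReal (measure_ne_top volume (bad A))]
    exact ENNReal.ofReal_le_ofReal hch
  have hbad : volume {ω | ε < f ω} ≤ ENNReal.ofReal δ := by
    calc volume {ω | ε < f ω} ≤ volume (⋃ A ∈ (univ : Finset (Finset σ)), bad A) :=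
          measure_mono hsubset
      _ ≤ ∑ A ∈ (univ : Finset (Finset σ)), volume (bad A) := measure_biUnion_finset_le _ _
      _ ≤ ∑ _A ∈ (univ : Finset (Finset σ)), ENNReal.ofReal (Real.exp (-(2 * S * L))) :=
          Finset.sum_le_sum fun A _ => hperA A
      _ = (2^S : ℕ) * ENNReal.ofReal (Real.exp (-(2 * S * L))) := by
          rw [Finset.sum_const, card_univ, Fintype.card_finset, nsmul_eq_mul]
      _ = ENNReal.ofReal ((2^S : ℕ) * Real.exp (-(2 * S * L))) := by
          rw [ENNReal.ofReal_mul (by positivity), ENNReal.ofReal_natCast]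
      _ ≤ ENNReal.ofReal δ := by
          apply ENNReal.ofReal_le_ofReal
          have hexpL : Real.exp (-(2 * S * L)) = (δ / 3) ^ (2 * S) := by
            have h1 : -(2 * S * L) = (2 * S : ℕ) * (-L) := by push_cast; ring
            rw [h1, Real.exp_nat_mul, Real.exp_neg, hLdef, Real.exp_log (by positivity)]
            rw [inv_div]
          rw [hexpL]
          have hbase : (δ / 3) ^ (2 * S) ≤ (δ^2 / 9) ^ S := by
            rw [pow_mul]
            apply pow_le_pow_left₀ (by positivity)
            nlinarith
          calc (2^S : ℕ) * (δ / 3) ^ (2 * S) ≤ (2:ℝ)^S * (δ^2 / 9) ^ S := by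
                push_cast
                exact mul_le_mul_of_nonneg_left hbase (by positivity)
            _ = (2 * (δ^2 / 9)) ^ S := by rw [mul_pow]
            _ ≤ (2 * (δ^2 / 9)) ^ 1 := by
                apply pow_le_pow_of_le_one (by positivity) (by nlinarith) hS1
            _ ≤ δ := by nlinarith
  -- conclude
  have hGmeas : MeasurableSet {ω | f ω ≤ ε} := measurableSet_le hf measurable_const
  have hcompl : {ω | f ω ≤ ε}ᶜ = {ω | ε < f ω} := by
    ext ω; simp [not_le]
  have h2 : volume {ω | ε < f ω} = 1 - volume {ω | f ω ≤ ε} := by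
    rw [← hcompl, measure_compl hGmeas (measure_ne_top _ _), measure_univ]
  rw [h2, tsub_le_iff_right] at hbad
  rw [show {ω | ∑ s, |p s - pbar ω s| ≤
      Real.sqrt (4 * (Fintype.card σ) * Real.log (3 / δ) / n)} = {ω | f ω ≤ ε} from rfl]
  have h1δ : ENNReal.ofReal (1 - δ) = 1 - ENNReal.ofReal δ := by
    rw [ENNReal.ofReal_sub _ hδ0.le, ENNReal.ofReal_one]
  rw [h1δ, tsub_le_iff_right, add_comm]
  exact hbad
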